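/- The integral ∫_{-∞}^{∞} u·(σ(u) - 1_{(0,∞)}(u)) du converges and equals -π²/6. -/

import Mathlib

noncomputable def sigmaF (x : ℝ) : ℝ := 1 / (1 + Real.exp (-x))

open MeasureTheory Real Set

lemma sigma_rw (u : ℝ) :
    u * (sigmaF u - Set.indicator (Set.Ioi (0:ℝ)) (fun _ => (1:ℝ)) u)
      = -(|u| * Real.exp (-|u|) / (1 + Real.exp (-|u|))) := by
  rcases lt_trichotomy u 0 with h | h | h
  · rw [Set.indicator_of_notMem (by simpa using h.le)]
    rw [abs_of_neg h, sigmaF]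
    have h1 : Real.exp (-u) ≠ 0 := (Real.exp_pos _).ne'
    have h2 : (1 : ℝ) + Real.exp (-u) ≠ 0 := by positivity
    have h3 : (1 : ℝ) + Real.exp (- -u) ≠ 0 := by positivity
    have hx : Real.exp u * Real.exp (-u) = 1 := by
      rw [← Real.exp_add]; simp
    field_simp
    linear_combination -u * hx
  · simp [h, sigmaF]
  · rw [Set.indicator_of_mem (by simpa using h)]
    rw [abs_of_pos h, sigmaF]
    have h2 : (1 : ℝ) + Real.exp (-u) ≠ 0 := by positivity
    field_simp
    ring

/-- integrability of `x * exp (-(a*x))` on `Ioi 0`. -/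
lemma integrableOn_x_exp {a : ℝ} (ha : 0 < a) :
    IntegrableOn (fun x : ℝ => x * Real.exp (-(a * x))) (Ioi 0) := by
  have := integrableOn_rpow_mul_exp_neg_mul_rpow
    (by norm_num : (-1:ℝ) < 1) one_pos ha
  simpa [Real.rpow_one, neg_mul] using this

lemma integral_x_exp {a : ℝ} (ha : 0 < a) :
    ∫ x in Ioi (0:ℝ), x * Real.exp (-(a * x)) = 1 / a ^ 2 := by
  have h := Real.integral_rpow_mul_exp_neg_mul_Ioi (a := 2) (r := a) two_pos ha
  rw [show ((2:ℝ) - 1) = 1 by norm_num] at h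
  simp only [Real.rpow_one] at h
  rw [h, Real.Gamma_two, mul_one, show (2:ℝ) = ((2:ℕ):ℝ) by norm_num,
    Real.rpow_natCast, div_pow, one_pow]

lemma hasSum_pi2_12 :
    HasSum (fun k : ℕ => 1 / (2*(k:ℝ)+1) ^ 2 - 1 / (2*(k:ℝ)+2) ^ 2) (π ^ 2 / 12) := by
  have h2 : HasSum (fun n : ℕ => 1 / (n:ℝ) ^ 2) (π ^ 2 / 6) := hasSum_zeta_two
  have heven : HasSum (fun k : ℕ => 1 / ((2*k:ℕ):ℝ) ^ 2) (π ^ 2 / 6 / 4) := by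
    have h4 := h2.div_const 4
    convert h4 using 2 with k
    · rfl
    push_cast
    rcases eq_or_ne (k:ℝ) 0 with hk | hk
    · simp [hk]
    · field_simp; ring
  have hosum : Summable (fun k : ℕ => 1 / ((2*k+1:ℕ):ℝ) ^ 2) :=
    h2.summable.comp_injective (fun a b hab => by omega)
  have ho := hosum.hasSum
  have huniq := (HasSum.even_add_odd (f := fun n : ℕ => 1 / (n:ℝ) ^ 2) heven ho).unique h2
  have hval : (∑' k : ℕ, 1 / ((2*k+1:ℕ):ℝ) ^ 2) = π ^ 2 / 8 := by linarith
  rw [hval] at ho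
  have heven' : HasSum (fun k : ℕ => 1 / ((2*(k+1):ℕ):ℝ) ^ 2) (π ^ 2 / 6 / 4) := by
    refine (hasSum_nat_add_iff (f := fun n : ℕ => 1 / ((2*n:ℕ):ℝ) ^ 2) 1).mpr ?_
    simpa using heven
  have hfin := ho.sub heven'
  have hfe : (fun k : ℕ => 1 / ((2*k+1:ℕ):ℝ) ^ 2 - 1 / ((2*(k+1):ℕ):ℝ) ^ 2)
      = (fun k : ℕ => 1 / (2*(k:ℝ)+1) ^ 2 - 1 / (2*(k:ℝ)+2) ^ 2) := by
    funext k; push_cast; ring_nf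
  rw [hfe] at hfin
  have : π ^ 2 / 8 - π ^ 2 / 6 / 4 = π ^ 2 / 12 := by ring
  rwa [this] at hfin

theorem integral_mul_sigma_sub_indicator :
    MeasureTheory.Integrable
      (fun u : ℝ => u * (sigmaF u - Set.indicator (Set.Ioi (0:ℝ)) (fun _ => (1:ℝ)) u)) ∧
    ∫ u : ℝ, u * (sigmaF u - Set.indicator (Set.Ioi (0:ℝ)) (fun _ => (1:ℝ)) u)
      = -(Real.pi ^ 2 / 6) := by
  have hrw : (fun u : ℝ => u * (sigmaF u - Set.indicator (Set.Ioi (0:ℝ)) (fun _ => (1:ℝ)) u))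
      = fun u : ℝ => -(|u| * Real.exp (-|u|) / (1 + Real.exp (-|u|))) := funext sigma_rw
  set G : ℝ → ℝ := fun x => -(x * Real.exp (-x) / (1 + Real.exp (-x))) with hGdef
  have hGcont : Continuous G := by
    apply Continuous.neg
    exact (continuous_id.mul (continuous_neg.rexp)).div
      (continuous_const.add continuous_neg.rexp) (fun x => by positivity)
  have hbound : ∀ x ∈ Ioi (0:ℝ), ‖G x‖ ≤ x * Real.exp (-(1 * x)) := by
    intro x hx
    have hx0 : 0 < x := hx
    have hd : (1:ℝ) ≤ 1 + Real.exp (-x) := by nlinarith [Real.exp_pos (-x)]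
    rw [Real.norm_eq_abs, hGdef]
    rw [abs_neg, abs_of_nonneg (by positivity), one_mul]
    rw [div_le_iff₀ (by positivity)]
    nlinarith [Real.exp_pos (-x), mul_pos hx0 (Real.exp_pos (-x))]
  have hIoi : IntegrableOn G (Ioi 0) := by
    refine Integrable.mono' (integrableOn_x_exp one_pos)
      hGcont.aestronglyMeasurable.restrict ?_
    rw [ae_restrict_iff' measurableSet_Ioi]
    filter_upwards with x hx using hbound x hx
  -- series terms
  set F : ℕ → ℝ → ℝ := fun k x =>
    x * Real.exp (-((2*(k:ℝ)+2) * x)) - x * Real.exp (-((2*(k:ℝ)+1) * x)) with hFdef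
  have hk1 : ∀ k : ℕ, (0:ℝ) < 2*(k:ℝ)+1 := fun k => by positivity
  have hk2 : ∀ k : ℕ, (0:ℝ) < 2*(k:ℝ)+2 := fun k => by positivity
  have hFint : ∀ k : ℕ, Integrable (F k) (volume.restrict (Ioi 0)) := fun k =>
    (integrableOn_x_exp (hk2 k)).sub (integrableOn_x_exp (hk1 k))
  have hFintval : ∀ k : ℕ, ∫ x in Ioi (0:ℝ), F k x
      = 1 / (2*(k:ℝ)+2) ^ 2 - 1 / (2*(k:ℝ)+1) ^ 2 := by
    intro k
    rw [hFdef]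
    rw [integral_sub (integrableOn_x_exp (hk2 k)) (integrableOn_x_exp (hk1 k)),
      integral_x_exp (hk2 k), integral_x_exp (hk1 k)]
  have hFneg : ∀ k : ℕ, ∀ x ∈ Ioi (0:ℝ), F k x ≤ 0 := by
    intro k x hx
    have hx0 : (0:ℝ) < x := hx
    have : Real.exp (-((2*(k:ℝ)+2) * x)) ≤ Real.exp (-((2*(k:ℝ)+1) * x)) := by
      apply Real.exp_le_exp.mpr; nlinarith
    rw [hFdef]; simp only
    nlinarith
  have hFnorm : ∀ k : ℕ, ∫ x in Ioi (0:ℝ), ‖F k x‖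
      = 1 / (2*(k:ℝ)+1) ^ 2 - 1 / (2*(k:ℝ)+2) ^ 2 := by
    intro k
    have : ∫ x in Ioi (0:ℝ), ‖F k x‖ = ∫ x in Ioi (0:ℝ), -(F k x) := by
      refine setIntegral_congr_fun measurableSet_Ioi (fun x hx => ?_)
      rw [Real.norm_eq_abs, abs_of_nonpos (hFneg k x hx)]
    rw [this, integral_neg, hFintval k]
    ring
  have hsummable : Summable (fun k : ℕ => ∫ x in Ioi (0:ℝ), ‖F k x‖) := by
    have hS : Summable (fun k : ℕ => 1 / ((k:ℝ)+1) ^ 2) := by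
      have h0 := (hasSum_zeta_two).summable
      have := (summable_nat_add_iff (f := fun n : ℕ => 1 / (n:ℝ) ^ 2) 1).mpr h0
      refine this.congr (fun k => ?_)
      push_cast; ring
    refine Summable.of_nonneg_of_le
      (fun k => integral_nonneg (fun x => norm_nonneg _)) (fun k => ?_) hS
    rw [hFnorm k]
    have h1 : ((k:ℝ)+1) ^ 2 ≤ (2*(k:ℝ)+1) ^ 2 := by nlinarith [Nat.cast_nonneg (α := ℝ) k]
    have h2 : (0:ℝ) < (2*(k:ℝ)+2) ^ 2 := by positivity
    have h3 : (0:ℝ) < ((k:ℝ)+1) ^ 2 := by positivity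
    have := one_div_le_one_div_of_le h3 h1
    have h4 : (0:ℝ) ≤ 1 / (2*(k:ℝ)+2) ^ 2 := by positivity
    linarith
  -- pointwise sum
  have hpoint : ∀ x ∈ Ioi (0:ℝ), HasSum (fun k : ℕ => F k x) (G x) := by
    intro x hx
    have hx0 : (0:ℝ) < x := hx
    set r : ℝ := Real.exp (-x) with hrdef
    have hr0 : 0 < r := Real.exp_pos _
    have hr1 : r < 1 := by rw [hrdef, Real.exp_lt_one_iff]; linarith
    have hgeo : HasSum (fun k : ℕ => (r^2)^k) (1 / (1 - r^2)) := by
      simpa [one_div] using hasSum_geometric_of_lt_one (by positivity) (by nlinarith)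
    have hmul := hgeo.mul_left (-(x * (r - r^2)))
    have hterm : (fun k : ℕ => -(x * (r - r^2)) * (r^2)^k) = fun k : ℕ => F k x := by
      funext k
      have e1 : Real.exp (-((2*(k:ℝ)+1) * x)) = r ^ (2*k+1) := by
        rw [hrdef, ← Real.exp_nat_mul]
        congr 1; push_cast; ring
      have e2 : Real.exp (-((2*(k:ℝ)+2) * x)) = r ^ (2*k+2) := by
        rw [hrdef, ← Real.exp_nat_mul]
        congr 1; push_cast; ring
      have e3 : (r^2)^k = r^(2*k) := (pow_mul r 2 k).symm
      rw [hFdef]; simp only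
      rw [e1, e2, e3, pow_add, pow_add]
      ring
    rw [hterm] at hmul
    convert hmul using 1
    · rfl
    have hne : 1 - r ≠ 0 := by linarith
    have hne2 : 1 + r ≠ 0 := by positivity
    have hne3 : 1 - Real.exp (-x) ^ 2 ≠ 0 := by nlinarith
    rw [hGdef]; simp only
    rw [← hrdef]
    have hne4 : 1 - r ^ 2 ≠ 0 := by nlinarith
    field_simp
    ring
  have hint := MeasureTheory.hasSum_integral_of_summable_integral_norm
    (μ := volume.restrict (Ioi 0)) hFint hsummable
  have htsum : ∫ x in Ioi (0:ℝ), (∑' k : ℕ, F k x) = ∫ x in Ioi (0:ℝ), G x := by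
    refine setIntegral_congr_fun measurableSet_Ioi (fun x hx => ?_)
    exact (hpoint x hx).tsum_eq
  rw [htsum] at hint
  simp only [hFintval] at hint
  have hneg := hasSum_pi2_12.neg
  simp only [neg_sub] at hneg
  have hIval : ∫ x in Ioi (0:ℝ), G x = -(π ^ 2 / 12) := hint.unique hneg
  -- assemble
  have habs_fun : (fun u : ℝ => u * (sigmaF u - Set.indicator (Set.Ioi (0:ℝ)) (fun _ => (1:ℝ)) u))
      = fun u : ℝ => G |u| := by
    funext u; rw [sigma_rw u]
  have hIoiAbs : IntegrableOn (fun x : ℝ => G |x|) (Ioi 0) :=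
    hIoi.congr_fun (fun x hx => by rw [abs_of_pos hx]) measurableSet_Ioi
  have hInt : Integrable (fun x : ℝ => G |x|) := by
    have int_Iic : IntegrableOn (fun x : ℝ => G |x|) (Iic 0) := by
      rw [← Measure.map_neg_eq_self (volume : Measure ℝ)]
      have m : MeasurableEmbedding fun x : ℝ => -x := (Homeomorph.neg ℝ).measurableEmbedding
      rw [m.integrableOn_map_iff]
      simp_rw [Function.comp_def, abs_neg, neg_preimage, neg_Iic, neg_zero]
      exact (integrableOn_Ici_iff_integrableOn_Ioi).mpr hIoiAbs
    have := int_Iic.union hIoiAbs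
    rwa [Iic_union_Ioi, integrableOn_univ] at this
  constructor
  · rw [habs_fun]; exact hInt
  · rw [habs_fun]
    rw [integral_comp_abs (f := G), hIval]
    ring
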